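/- Let μ : P(M) → P(M′) be a map between projective lines over rings R and R′ that sends every harmonic quadruple to a harmonic quadruple, and assume 2 ∈ R* so that every pair of distant points extends to a harmonic quadruple. Then μ is distant-preserving: p₀ distant from p₁ implies μ(p₀) distant from μ(p₁). -/

import Mathlib

/-- A point of the projective line over `M`. -/
def IsPoint (R M : Type*) [Ring R] [AddCommGroup M] [Module R M]
    (p : Submodule R M) : Prop :=
  ∃ g : Module.Basis (Fin 2) R M, p = Submodule.span R {g 0}

/-- Harmonic quadruple of points of the projective line over `M`. -/
def Harm (R M : Type*) [Ring R] [AddCommGroup M] [Module R M]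
    (p₀ p₁ p₂ p₃ : Submodule R M) : Prop :=
  ∃ g : Module.Basis (Fin 2) R M,
    p₀ = Submodule.span R {g 0} ∧ p₁ = Submodule.span R {g 1} ∧
    p₂ = Submodule.span R {g 0 + g 1} ∧ p₃ = Submodule.span R {g 0 - g 1}

lemma smul_basis_eq_zero {R M : Type*} [Ring R] [AddCommGroup M] [Module R M]
    (g : Module.Basis (Fin 2) R M) (i : Fin 2) {a : R} (h : a • g i = 0) : a = 0 := by
  have := g.linearIndependent
  have h2 : (Finsupp.linearCombination R g) (Finsupp.single i a) = 0 := by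
    simpa [Finsupp.linearCombination_single] using h
  exact Finsupp.single_eq_zero.mp (linearIndependent_iff.mp g.linearIndependent _ h2)

lemma basis_span_isCompl {R M : Type*} [Ring R] [AddCommGroup M] [Module R M]
    (g : Module.Basis (Fin 2) R M) :
    IsCompl (Submodule.span R {g 0}) (Submodule.span R {g 1}) := by
  constructor
  · rw [disjoint_iff_inf_le]
    rintro x ⟨hx0, hx1⟩
    obtain ⟨a, rfl⟩ := Submodule.mem_span_singleton.mp hx0
    obtain ⟨b, hb⟩ := Submodule.mem_span_singleton.mp hx1
    have hab : a • g 0 + (-b) • g 1 = 0 := by rw [neg_smul, ← hb]; abel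
    have := LinearIndependent.pair_iff.mp ?_ a (-b) hab
    · simp [this.1]
    · have : ![g 0, g 1] = g ∘ ![0, 1] := by
        funext i; fin_cases i <;> simp
      rw [this]
      exact g.linearIndependent.comp ![0, 1] (by decide)
  · rw [codisjoint_iff, ← Submodule.span_union, eq_top_iff, ← g.span_eq,
      Submodule.span_le]
    rintro x ⟨i, rfl⟩
    apply Submodule.subset_span
    fin_cases i <;> simp

lemma isCompl_basis {R M : Type*} [Ring R] [AddCommGroup M] [Module R M]
    (g h : Module.Basis (Fin 2) R M)
    (hc : IsCompl (Submodule.span R {g 0}) (Submodule.span R {h 0})) :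
    ∃ b : Module.Basis (Fin 2) R M, b 0 = g 0 ∧ b 1 = h 0 := by
  have hli : LinearIndependent R ![g 0, h 0] := by
    rw [LinearIndependent.pair_iff]
    intro s t hst
    have h1 : s • g 0 ∈ Submodule.span R {g 0} ⊓ Submodule.span R {h 0} := by
      constructor
      · exact Submodule.smul_mem _ _ (Submodule.mem_span_singleton_self _)
      · have : s • g 0 = (-t) • h 0 := by
          rw [neg_smul]; exact eq_neg_of_add_eq_zero_left hst
        rw [this]
        exact Submodule.smul_mem _ _ (Submodule.mem_span_singleton_self _)
    rw [hc.inf_eq_bot] at h1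
    have hs : s = 0 := smul_basis_eq_zero g 0 h1
    have ht : t • h 0 = 0 := by
      have := hst; rw [hs, zero_smul, zero_add] at this; exact this
    exact ⟨hs, smul_basis_eq_zero h 0 ht⟩
  have hsp : ⊤ ≤ Submodule.span R (Set.range ![g 0, h 0]) := by
    have : Set.range ![g 0, h 0] = {g 0} ∪ {h 0} := by
      ext x
      simp [Set.range, Fin.exists_fin_two, or_comm]
      tauto
    rw [this, Submodule.span_union, ← codisjoint_iff.mp hc.2]
  refine ⟨Module.Basis.mk hli hsp, ?_, ?_⟩ <;> rw [Module.Basis.mk_apply] <;> simp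

/-- A harmonicity preserver between projective lines is distant preserving
(assuming `2 ∈ R*`, so that any pair of distant points extends to a harmonic
quadruple). -/
theorem harmonicity_preserver_is_distant_preserving
    (R M R' M' : Type*) [Ring R] [AddCommGroup M] [Module R M]
    [Ring R'] [AddCommGroup M'] [Module R' M']
    (h2 : IsUnit (2 : R))
    (μ : Submodule R M → Submodule R' M')
    (hμ : ∀ p₀ p₁ p₂ p₃ : Submodule R M,
      Harm R M p₀ p₁ p₂ p₃ → Harm R' M' (μ p₀) (μ p₁) (μ p₂) (μ p₃)) :
    ∀ p₀ p₁ : Submodule R M, IsPoint R M p₀ → IsPoint R M p₁ →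
      IsCompl p₀ p₁ → IsCompl (μ p₀) (μ p₁) := by
  rintro p₀ p₁ ⟨g, rfl⟩ ⟨h, rfl⟩ hc
  obtain ⟨b, hb0, hb1⟩ := isCompl_basis g h hc
  have hharm : Harm R M (Submodule.span R {g 0}) (Submodule.span R {h 0})
      (Submodule.span R {b 0 + b 1}) (Submodule.span R {b 0 - b 1}) :=
    ⟨b, by rw [hb0], by rw [hb1], rfl, rfl⟩
  obtain ⟨g', hg0, hg1, -, -⟩ := hμ _ _ _ _ hharm
  rw [hg0, hg1]
  exact basis_span_isCompl g'
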